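/- Let K be a field of characteristic 0, A = K[t], D^# = K⟨t, θ⟩ with θ = t∂ and [θ, t] = t. For any left D^#-module E, there is a unique isomorphism of (D^#, D^#)-bimodules γ_E : D^# ⊗_A E → E ⊗_A D^# with γ_E(1 ⊗ e) = e ⊗ 1 for all e ∈ E, where D^# ⊗_A E uses the right A-structure of D^# and the tensor-product left action together with the diagonal right action, and E ⊗_A D^# uses the diagonal left action together with right multiplication. -/

import Mathlib

open TensorProduct MulOpposite Polynomial

set_option synthInstance.maxHeartbeats 1000000
set_option maxHeartbeats 1000000

/-- **The transposition isomorphism `γ_E : D^# ⊗_A E ≅ E ⊗_A D^#`.**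
Let `K` be a field of characteristic `0`, `A = K[t]`, and `D^# = K⟨t, θ⟩` the ring of
logarithmic differential operators on `A` (`θ = t∂`, `[θ, jA a] = jA (t·a')`), free
over `A` with PBW basis `(θ^k)`.  Let `E` be a left `D^#`-module (with compatible
`A`-structure).  Realize `D^# ⊗_A E` (computed with the *right* `A`-structure of
`D^#`, encoded by a copy `D'` of `D^#` with `a • c(x) = c(x·a)`) with the
tensor-product left `D^#`-action and the diagonal right `D^#`-action, and
`E ⊗_A D^#` with the diagonal left `D^#`-action and right multiplication.
Then there is a unique isomorphism of `(D^#, D^#)`-bimodules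
`γ_E : D^# ⊗_A E ≅ E ⊗_A D^#` with `γ_E(1 ⊗ e) = e ⊗ 1` for all `e`. -/
theorem transposition_isomorphism_gamma
    (K : Type*) [Field K] [CharZero K]
    (Dsh : Type*) [Ring Dsh] [Algebra K Dsh]
    (jA : Polynomial K →ₐ[K] Dsh) (th : Dsh)
    (hrel : ∀ a : Polynomial K,
      th * jA a - jA a * th = jA (Polynomial.X * Polynomial.derivative a))
    [Module (Polynomial K) Dsh]
    (hAD : ∀ (a : Polynomial K) (x : Dsh), a • x = jA a * x)
    (B : Module.Basis ℕ (Polynomial K) Dsh) (hB : ∀ k : ℕ, B k = th ^ k)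
    (E : Type*) [AddCommGroup E] [Module Dsh E] [Module (Polynomial K) E]
    (hAE : ∀ (a : Polynomial K) (e : E), jA a • e = a • e)
    (D' : Type*) [AddCommGroup D'] [Module (Polynomial K) D']
    (c : Dsh ≃+ D')
    (hc : ∀ (a : Polynomial K) (x : Dsh), a • c x = c (x * jA a))
    [Module Dsh (D' ⊗[Polynomial K] E)]
    (hL : ∀ (P x : Dsh) (e : E),
      P • ((c x) ⊗ₜ[Polynomial K] e) = (c (P * x)) ⊗ₜ[Polynomial K] e)
    [Module Dshᵐᵒᵖ (D' ⊗[Polynomial K] E)]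
    (hRA : ∀ (a : Polynomial K) (x : Dsh) (e : E),
      op (jA a) • ((c x) ⊗ₜ[Polynomial K] e) = (c (x * jA a)) ⊗ₜ[Polynomial K] e)
    (hRθ : ∀ (x : Dsh) (e : E),
      op th • ((c x) ⊗ₜ[Polynomial K] e) =
        (c (x * th)) ⊗ₜ[Polynomial K] e - (c x) ⊗ₜ[Polynomial K] (th • e))
    [Module Dsh (E ⊗[Polynomial K] Dsh)]
    (hL'A : ∀ (a : Polynomial K) (e : E) (x : Dsh),
      jA a • (e ⊗ₜ[Polynomial K] x) = (a • e) ⊗ₜ[Polynomial K] x)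
    (hL'θ : ∀ (e : E) (x : Dsh),
      th • (e ⊗ₜ[Polynomial K] x) =
        (th • e) ⊗ₜ[Polynomial K] x + e ⊗ₜ[Polynomial K] (th * x))
    [Module Dshᵐᵒᵖ (E ⊗[Polynomial K] Dsh)]
    (hR' : ∀ (P : Dsh) (e : E) (x : Dsh),
      op P • (e ⊗ₜ[Polynomial K] x) = e ⊗ₜ[Polynomial K] (x * P)) :
    ∃! γ : (D' ⊗[Polynomial K] E) ≃+ (E ⊗[Polynomial K] Dsh),
      (∀ (P : Dsh) (z : D' ⊗[Polynomial K] E), γ (P • z) = P • γ z) ∧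
      (∀ (P : Dsh) (z : D' ⊗[Polynomial K] E), γ (op P • z) = op P • γ z) ∧
      ∀ e : E, γ ((c 1) ⊗ₜ e) = e ⊗ₜ (1 : Dsh) := by
  classical
  -- An induction principle: `Dsh` is generated as a ring by `jA` and `th`.
  have gen : ∀ (p : Dsh → Prop), (∀ a, p (jA a)) → p th →
      (∀ x y, p x → p y → p (x + y)) → (∀ x, p x → p (-x)) →
      (∀ x y, p x → p y → p (x * y)) → ∀ x, p x := by
    intro p hja hth hadd hneg hmul x
    have h0 : p 0 := by simpa using hja 0
    have h1 : p 1 := by simpa using hja 1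
    have hx : x ∈ Subring.closure (Set.range jA ∪ {th}) := by
      have hrepr : (Finsupp.linearCombination (Polynomial K) B) (B.repr x) = x :=
        B.linearCombination_repr x
      rw [← hrepr, Finsupp.linearCombination_apply, Finsupp.sum]
      refine Subring.sum_mem _ fun k _ => ?_
      rw [hAD, hB]
      have hm1 : jA (B.repr x k) ∈ Subring.closure (Set.range ⇑jA ∪ {th}) :=
        Subring.subset_closure (Or.inl ⟨_, rfl⟩)
      have hm2 : th ∈ Subring.closure (Set.range ⇑jA ∪ {th}) :=
        Subring.subset_closure (Or.inr rfl)
      exact mul_mem hm1 (pow_mem hm2 k)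
    refine Subring.closure_induction ?_ h0 h1 (fun x y _ _ => hadd x y)
      (fun x _ => hneg x) (fun x y _ _ => hmul x y) hx
    rintro y (⟨a, rfl⟩ | rfl)
    · exact hja a
    · exact hth
  -- The left and right actions on `E ⊗ Dsh` commute.
  have commE : ∀ (P Q : Dsh) (z : E ⊗[Polynomial K] Dsh),
      P • (op Q • z) = op Q • (P • z) := by
    refine gen (fun P => ∀ Q z, P • (op Q • z) = op Q • (P • z)) ?_ ?_ ?_ ?_ ?_
    · intro a Q z
      induction z using TensorProduct.induction_on with
      | zero => simp
      | tmul e x => rw [hR', hL'A, hL'A, hR']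
      | add u v hu hv => rw [smul_add, smul_add, hu, hv, smul_add, smul_add]
    · intro Q z
      induction z using TensorProduct.induction_on with
      | zero => simp
      | tmul e x => rw [hR', hL'θ, hL'θ, smul_add, hR', hR', mul_assoc]
      | add u v hu hv => rw [smul_add, smul_add, hu, hv, smul_add, smul_add]
    · intro x y hx hy Q z
      rw [add_smul, hx, hy, add_smul, smul_add]
    · intro x hx Q z
      rw [neg_smul, hx, neg_smul, smul_neg]
    · intro x y hx hy Q z
      rw [mul_smul, hy, hx, mul_smul]
  -- The left and right actions on `D' ⊗ E` commute.
  have commD : ∀ (Q P : Dsh) (z : D' ⊗[Polynomial K] E),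
      P • (op Q • z) = op Q • (P • z) := by
    refine gen (fun Q => ∀ P z, P • (op Q • z) = op Q • (P • z)) ?_ ?_ ?_ ?_ ?_
    · intro a P z
      induction z using TensorProduct.induction_on with
      | zero => simp
      | tmul d e =>
        obtain ⟨x, rfl⟩ : ∃ x, c x = d := ⟨c.symm d, c.apply_symm_apply d⟩
        rw [hRA, hL, hL, hRA, mul_assoc]
      | add u v hu hv => rw [smul_add, smul_add, hu, hv, smul_add, smul_add]
    · intro P z
      induction z using TensorProduct.induction_on with
      | zero => simp
      | tmul d e =>
        obtain ⟨x, rfl⟩ : ∃ x, c x = d := ⟨c.symm d, c.apply_symm_apply d⟩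
        rw [hRθ, smul_sub, hL, hL, hL, hRθ, mul_assoc]
      | add u v hu hv => rw [smul_add, smul_add, hu, hv, smul_add, smul_add]
    · intro x y hx hy P z
      rw [op_add, add_smul, smul_add, hx, hy, add_smul]
    · intro x hx P z
      rw [op_neg, neg_smul, smul_neg, hx, neg_smul]
    · intro x y hx hy P z
      rw [op_mul, mul_smul, hy, hx, mul_smul]
  -- the forward map
  let f : D' →+ E →+ (E ⊗[Polynomial K] Dsh) :=
    { toFun := fun d =>
        { toFun := fun e => (c.symm d) • (e ⊗ₜ[Polynomial K] (1 : Dsh))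
          map_zero' := by simp
          map_add' := fun e₁ e₂ => by simp [TensorProduct.add_tmul, smul_add] }
      map_zero' := by ext e; simp
      map_add' := fun d₁ d₂ => by ext e; simp [add_smul] }
  have hbal : ∀ (a : Polynomial K) (d : D') (e : E), f (a • d) e = f d (a • e) := by
    intro a d e
    have h1 : c.symm (a • d) = c.symm d * jA a := by
      conv_lhs => rw [← c.apply_symm_apply d, hc, c.symm_apply_apply]
    show c.symm (a • d) • (e ⊗ₜ[Polynomial K] (1 : Dsh))
        = c.symm d • ((a • e) ⊗ₜ[Polynomial K] (1 : Dsh))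
    rw [h1, mul_smul, ← hL'A]
  let φ : (D' ⊗[Polynomial K] E) →+ (E ⊗[Polynomial K] Dsh) :=
    TensorProduct.liftAddHom f hbal
  have φtmul : ∀ (x : Dsh) (e : E),
      φ ((c x) ⊗ₜ[Polynomial K] e) = x • (e ⊗ₜ[Polynomial K] (1 : Dsh)) := by
    intro x e
    show c.symm (c x) • (e ⊗ₜ[Polynomial K] (1 : Dsh)) = _
    rw [c.symm_apply_apply]
  -- the backward map
  let g : E →+ Dsh →+ (D' ⊗[Polynomial K] E) :=
    { toFun := fun e =>
        { toFun := fun x => op x • ((c 1) ⊗ₜ[Polynomial K] e)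
          map_zero' := by simp
          map_add' := fun x₁ x₂ => by simp [op_add, add_smul] }
      map_zero' := by ext x; simp
      map_add' := fun e₁ e₂ => by ext x; simp [TensorProduct.tmul_add] }
  have hbal' : ∀ (a : Polynomial K) (e : E) (x : Dsh), g (a • e) x = g e (a • x) := by
    intro a e x
    show op x • ((c 1) ⊗ₜ[Polynomial K] (a • e)) = op (a • x) • ((c 1) ⊗ₜ[Polynomial K] e)
    rw [hAD, op_mul, mul_smul, hRA, one_mul, ← TensorProduct.smul_tmul, hc, one_mul]
  let ψ : (E ⊗[Polynomial K] Dsh) →+ (D' ⊗[Polynomial K] E) :=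
    TensorProduct.liftAddHom g hbal'
  have ψtmul : ∀ (e : E) (x : Dsh),
      ψ (e ⊗ₜ[Polynomial K] x) = op x • ((c 1) ⊗ₜ[Polynomial K] e) := fun _ _ => rfl
  -- φ is left-equivariant
  have φL : ∀ (P : Dsh) (z : D' ⊗[Polynomial K] E), φ (P • z) = P • φ z := by
    intro P z
    induction z using TensorProduct.induction_on with
    | zero => rw [smul_zero, map_zero, smul_zero]
    | tmul d e =>
      obtain ⟨x, rfl⟩ : ∃ x, c x = d := ⟨c.symm d, c.apply_symm_apply d⟩
      rw [hL, φtmul, φtmul, mul_smul]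
    | add u v hu hv => rw [smul_add, map_add, hu, hv, map_add, smul_add]
  -- φ is right-equivariant
  have φR : ∀ (P : Dsh) (z : D' ⊗[Polynomial K] E), φ (op P • z) = op P • φ z := by
    refine gen (fun P => ∀ z, φ (op P • z) = op P • φ z) ?_ ?_ ?_ ?_ ?_
    · intro a z
      induction z using TensorProduct.induction_on with
      | zero => rw [smul_zero, map_zero, smul_zero]
      | tmul d e =>
        obtain ⟨x, rfl⟩ : ∃ x, c x = d := ⟨c.symm d, c.apply_symm_apply d⟩
        rw [hRA, φtmul, φtmul, mul_smul, hL'A, ← commE, hR', one_mul,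
          TensorProduct.smul_tmul, hAD, mul_one]
      | add u v hu hv => rw [smul_add, map_add, hu, hv, map_add, smul_add]
    · intro z
      induction z using TensorProduct.induction_on with
      | zero => rw [smul_zero, map_zero, smul_zero]
      | tmul d e =>
        obtain ⟨x, rfl⟩ : ∃ x, c x = d := ⟨c.symm d, c.apply_symm_apply d⟩
        rw [hRθ, map_sub, φtmul, φtmul, φtmul, mul_smul, hL'θ, mul_one, smul_add,
          add_sub_cancel_left, ← commE, hR', one_mul]
      | add u v hu hv => rw [smul_add, map_add, hu, hv, map_add, smul_add]
    · intro x y hx hy z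
      rw [op_add, add_smul, map_add, hx, hy, add_smul]
    · intro x hx z
      rw [op_neg, neg_smul, map_neg, hx, neg_smul]
    · intro x y hx hy z
      rw [op_mul, mul_smul, hy, hx, mul_smul]
  -- ψ is right-equivariant
  have ψR : ∀ (P : Dsh) (z : E ⊗[Polynomial K] Dsh), ψ (op P • z) = op P • ψ z := by
    intro P z
    induction z using TensorProduct.induction_on with
    | zero => rw [smul_zero, map_zero, smul_zero]
    | tmul e x => rw [hR', ψtmul, ψtmul, op_mul, mul_smul]
    | add u v hu hv => rw [smul_add, map_add, hu, hv, map_add, smul_add]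
  -- ψ is left-equivariant
  have ψL : ∀ (P : Dsh) (z : E ⊗[Polynomial K] Dsh), ψ (P • z) = P • ψ z := by
    refine gen (fun P => ∀ z, ψ (P • z) = P • ψ z) ?_ ?_ ?_ ?_ ?_
    · intro a z
      induction z using TensorProduct.induction_on with
      | zero => rw [smul_zero, map_zero, smul_zero]
      | tmul e x =>
        rw [hL'A, ψtmul, ψtmul, ← TensorProduct.smul_tmul, hc, one_mul, commD,
          hL, mul_one]
      | add u v hu hv => rw [smul_add, map_add, hu, hv, map_add, smul_add]
    · intro z
      induction z using TensorProduct.induction_on with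
      | zero => rw [smul_zero, map_zero, smul_zero]
      | tmul e x =>
        rw [hL'θ, map_add, ψtmul, ψtmul, ψtmul, op_mul, mul_smul, hRθ, one_mul,
          smul_sub, add_sub_cancel, commD, hL, mul_one]
      | add u v hu hv => rw [smul_add, map_add, hu, hv, map_add, smul_add]
    · intro x y hx hy z
      rw [add_smul, map_add, hx, hy, add_smul]
    · intro x hx z
      rw [neg_smul, map_neg, hx, neg_smul]
    · intro x y hx hy z
      rw [mul_smul, hx, hy, mul_smul]
  -- inverses
  have φψ : ∀ z, φ (ψ z) = z := by
    intro z
    induction z using TensorProduct.induction_on with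
    | zero => rw [map_zero, map_zero]
    | tmul e x => rw [ψtmul, φR, φtmul, one_smul, hR', one_mul]
    | add u v hu hv => rw [map_add, map_add, hu, hv]
  have ψφ : ∀ z, ψ (φ z) = z := by
    intro z
    induction z using TensorProduct.induction_on with
    | zero => rw [map_zero, map_zero]
    | tmul d e =>
      obtain ⟨x, rfl⟩ : ∃ x, c x = d := ⟨c.symm d, c.apply_symm_apply d⟩
      rw [φtmul, ψL, ψtmul, op_one, one_smul, hL, mul_one]
    | add u v hu hv => rw [map_add, map_add, hu, hv]
  -- assemble the equivalence
  refine ⟨{ toFun := ⇑φ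
            invFun := ⇑ψ
            left_inv := ψφ
            right_inv := φψ
            map_add' := φ.map_add }, ⟨φL, φR, ?_⟩, ?_⟩
  · intro e
    show φ ((c 1) ⊗ₜ[Polynomial K] e) = e ⊗ₜ[Polynomial K] (1 : Dsh)
    rw [φtmul, one_smul]
  · rintro γ ⟨hγL, -, hγe⟩
    refine AddEquiv.ext fun z => ?_
    show γ z = φ z
    induction z using TensorProduct.induction_on with
    | zero => rw [map_zero, map_zero]
    | tmul d e =>
      obtain ⟨x, rfl⟩ : ∃ x, c x = d := ⟨c.symm d, c.apply_symm_apply d⟩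
      have h1 : (c x) ⊗ₜ[Polynomial K] e = x • ((c 1) ⊗ₜ[Polynomial K] e) := by
        rw [hL, mul_one]
      rw [h1, hγL, hγe, φL, φtmul, one_smul]
    | add u v hu hv => rw [map_add, map_add, hu, hv]
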